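/- Let F be a real 2-uniform (n,k)-frame with analysis operator V and associated graph G_F, and let D ∈ 𝒟_3 have its three 1's in the diagonal positions i, j, l. Then ‖VᵀDV‖ = k/n + 2·c_{n,k} if the induced subgraph of G_F on {i,j,l} has an even number of edges (equivalently, is complete bipartite), and ‖VᵀDV‖ = k/n + c_{n,k} if it has an odd number of edges. -/

import Mathlib

open Matrix
open scoped Classical

noncomputable section

namespace FramesErasures

/-- The constant `c_{n,k} = sqrt(k(n-k)/(n^2(n-1)))`. -/
noncomputable def c (n k : ℕ) : ℝ :=
  Real.sqrt ((k : ℝ) * ((n : ℝ) - k) / ((n : ℝ) ^ 2 * ((n : ℝ) - 1)))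

/-- Operator norm (ℓ²→ℓ²) of a square real matrix. -/
noncomputable def opNorm {k : ℕ} (A : Matrix (Fin k) (Fin k) ℝ) : ℝ :=
  ‖Matrix.toEuclideanCLM (𝕜 := ℝ) A‖

/-- The diagonal 0-1 matrix with 1's exactly at the positions in `S`. -/
def diagS {n : ℕ} (S : Finset (Fin n)) : Matrix (Fin n) (Fin n) ℝ :=
  Matrix.diagonal fun i => if i ∈ S then 1 else 0

/-- `e_m^∞(F)`: the maximal norm of an error operator for `m` erasures. -/
noncomputable def errInf {n k : ℕ} (V : Matrix (Fin n) (Fin k) ℝ) (m : ℕ) : ℝ :=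
  sSup {x : ℝ | ∃ S : Finset (Fin n), S.card = m ∧ x = opNorm (Vᵀ * diagS S * V)}

/-- `e_m^p(F)`: the ℓᵖ-average of the norms of the error operators for `m` erasures. -/
noncomputable def errP {n k : ℕ} (V : Matrix (Fin n) (Fin k) ℝ) (m : ℕ) (p : ℝ) : ℝ :=
  ((n.choose m : ℝ)⁻¹ *
      ∑ S ∈ Finset.univ.filter fun S : Finset (Fin n) => S.card = m,
        opNorm (Vᵀ * diagS S * V) ^ p) ^ (1 / p)

/-- A Parseval frame is uniform if all diagonal Grammian entries equal `k/n`. -/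
def Uniform (n k : ℕ) (V : Matrix (Fin n) (Fin k) ℝ) : Prop :=
  ∀ j, (V * Vᵀ) j j = (k : ℝ) / n

/-- 2-uniformity, via the equiangularity characterization. -/
def TwoUniform (n k : ℕ) (V : Matrix (Fin n) (Fin k) ℝ) : Prop :=
  Uniform n k V ∧ ∀ i j, i ≠ j → |(V * Vᵀ) i j| = c n k

/-- The `n×n` all-ones matrix. -/
def Jmat (n : ℕ) : Matrix (Fin n) (Fin n) ℝ :=
  Matrix.of fun _ _ => 1

/-- A real 2-uniform `(n,k)`-frame, given by its analysis operator and signature matrix. -/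
structure TwoUniformFrame (n k : ℕ) where
  V : Matrix (Fin n) (Fin k) ℝ
  Q : Matrix (Fin n) (Fin n) ℝ
  parseval : Vᵀ * V = 1
  symm : Qᵀ = Q
  diag : ∀ i, Q i i = 0
  offdiag : ∀ i j, i ≠ j → Q i j = 1 ∨ Q i j = -1
  gram : V * Vᵀ = ((k : ℝ) / n) • (1 : Matrix (Fin n) (Fin n) ℝ) + c n k • Q

/-- The graph associated with a 2-uniform frame: `i ≠ j` adjacent iff `Q i j = -1`. -/
def frameGraph {n k : ℕ} (F : TwoUniformFrame n k) : SimpleGraph (Fin n) where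
  Adj i j := i ≠ j ∧ F.Q i j = -1
  symm := ⟨by
    intro i j h
    refine ⟨h.1.symm, ?_⟩
    have h2 : F.Q i j = F.Q j i := by
      have := congrFun (congrFun F.symm j) i
      simpa [Matrix.transpose_apply] using this
    rw [← h2]
    exact h.2⟩
  loopless := ⟨fun i h => h.1 rfl⟩

/-- A graph is complete bipartite (with one part possibly empty). -/
def IsCompleteBipartite {α : Type*} (G : SimpleGraph α) : Prop :=
  ∃ A : Set α, ∀ i j, G.Adj i j ↔ ((i ∈ A) ↔ (j ∉ A))

/-- `G` has an induced complete bipartite subgraph on `m` vertices. -/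
def HasInducedCompleteBipartite {n : ℕ} (G : SimpleGraph (Fin n)) (m : ℕ) : Prop :=
  ∃ S : Finset (Fin n), S.card = m ∧
    IsCompleteBipartite (G.induce (S : Set (Fin n)))

/-- The Seidel adjacency matrix of a graph. -/
noncomputable def seidel {α : Type*} [DecidableEq α] (G : SimpleGraph α) : Matrix α α ℝ :=
  Matrix.of fun i j => if i = j then 0 else if G.Adj i j then -1 else 1

/-- Switching equivalence of graphs: Seidel matrices conjugate by a product of a permutation
and a `±1` diagonal matrix. -/
def SwitchingEquivalent {α : Type*} [DecidableEq α] (G H : SimpleGraph α) : Prop :=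
  ∃ (σ : Equiv.Perm α) (ε : α → ℝ), (∀ i, ε i = 1 ∨ ε i = -1) ∧
    ∀ i j, seidel H i j = ε i * ε j * seidel G (σ i) (σ j)

/-- `G ∈ 𝒢_m^(s)`: the minimal number of edges in the switching class of `G` equals `s`. -/
def MinSwitchEdges {α : Type*} [DecidableEq α] (G : SimpleGraph α) (s : ℕ) : Prop :=
  IsLeast {t : ℕ | ∃ H : SimpleGraph α, SwitchingEquivalent G H ∧ H.edgeSet.ncard = t} s

/-- `lam` is the largest eigenvalue of the real matrix `A`. -/
def IsMaxEigenvalue {m : ℕ} (A : Matrix (Fin m) (Fin m) ℝ) (lam : ℝ) : Prop :=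
  (∃ v : Fin m → ℝ, v ≠ 0 ∧ A.mulVec v = lam • v) ∧
  ∀ μ : ℝ, (∃ v : Fin m → ℝ, v ≠ 0 ∧ A.mulVec v = μ • v) → μ ≤ lam

/-- A 2-uniform frame is 3-uniform if the error norm is the same for all triple erasures. -/
def ThreeUniform {n k : ℕ} (F : TwoUniformFrame n k) : Prop :=
  ∀ S T : Finset (Fin n), S.card = 3 → T.card = 3 →
    opNorm (F.Vᵀ * diagS S * F.V) = opNorm (F.Vᵀ * diagS T * F.V)

/- ===== auxiliary lemmas ===== -/

variable {n k : ℕ}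

lemma norm_symm_equiv {k : ℕ} (v : Fin k → ℝ) :
    ‖(WithLp.equiv 2 (Fin k → ℝ)).symm v‖ ^ 2 = v ⬝ᵥ v := by
  rw [← real_inner_self_eq_norm_sq, EuclideanSpace.inner_eq_star_dotProduct]
  simp [PiLp.inner_apply, RCLike.inner_apply, dotProduct, mul_comm]

lemma aux_opNorm {k : ℕ} (A : Matrix (Fin k) (Fin k) ℝ) (lam : ℝ) (hlam : 0 ≤ lam)
    (u : Fin k → ℝ) (hune : u ⬝ᵥ u ≠ 0) (heig : A *ᵥ u = lam • u)
    (hub : ∀ x, (A *ᵥ x) ⬝ᵥ (A *ᵥ x) ≤ lam * ((A *ᵥ x) ⬝ᵥ x)) :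
    opNorm A = lam := by
  set T := Matrix.toEuclideanCLM (𝕜 := ℝ) A with hT
  have key : ∀ x : Fin k → ℝ, ‖T ((WithLp.equiv 2 _).symm x)‖ ≤ lam * ‖(WithLp.equiv 2 (Fin k → ℝ)).symm x‖ := by
    intro x
    have h1 : T ((WithLp.equiv 2 _).symm x) = (WithLp.equiv 2 _).symm (A *ᵥ x) :=
      Matrix.toEuclideanCLM_toLp A x
    rw [h1]
    have hcs : (A *ᵥ x) ⬝ᵥ x ≤ ‖(WithLp.equiv 2 (Fin k → ℝ)).symm (A *ᵥ x)‖ * ‖(WithLp.equiv 2 (Fin k → ℝ)).symm x‖ := by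
      have := real_inner_le_norm ((WithLp.equiv 2 (Fin k → ℝ)).symm (A *ᵥ x)) ((WithLp.equiv 2 (Fin k → ℝ)).symm x)
      refine le_trans (le_of_eq ?_) this
      simp [PiLp.inner_apply, RCLike.inner_apply, dotProduct]
      exact Finset.sum_congr rfl fun _ _ => mul_comm _ _
    have h2 : ‖(WithLp.equiv 2 (Fin k → ℝ)).symm (A *ᵥ x)‖^2 ≤ lam * (‖(WithLp.equiv 2 (Fin k → ℝ)).symm (A *ᵥ x)‖ * ‖(WithLp.equiv 2 (Fin k → ℝ)).symm x‖) := by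
      rw [norm_symm_equiv]
      exact le_trans (hub x) (by nlinarith [hub x, hcs])
    set a := ‖(WithLp.equiv 2 (Fin k → ℝ)).symm (A *ᵥ x)‖
    set b := ‖(WithLp.equiv 2 (Fin k → ℝ)).symm x‖
    have ha : 0 ≤ a := norm_nonneg _
    have hb : 0 ≤ b := norm_nonneg _
    rcases eq_or_lt_of_le ha with h|h
    · rw [← h]; positivity
    · nlinarith
  have hub' : ‖T‖ ≤ lam := by
    apply ContinuousLinearMap.opNorm_le_bound _ hlam
    intro x
    have := key (WithLp.equiv 2 _ x)
    simpa using this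
  have hlb : lam ≤ ‖T‖ := by
    set u' := (WithLp.equiv 2 (Fin k → ℝ)).symm u with hu'
    have hn : ‖u'‖ ≠ 0 := by
      intro h
      apply hune
      rw [← norm_symm_equiv u, ← hu', h]; ring
    have h1 : T u' = (WithLp.equiv 2 _).symm (A *ᵥ u) := Matrix.toEuclideanCLM_toLp A u
    have h2 : ‖T u'‖ = lam * ‖u'‖ := by
      rw [h1, heig]
      have : (WithLp.equiv 2 (Fin k → ℝ)).symm (lam • u) = lam • u' := by
        simp [hu']
      rw [this, norm_smul]
      simp [abs_of_nonneg hlam]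
    have := T.le_opNorm u'
    rw [h2] at this
    have hn' : 0 < ‖u'‖ := lt_of_le_of_ne (norm_nonneg _) (Ne.symm hn)
    exact le_of_mul_le_mul_right (by linarith) hn'
  rw [opNorm, ← hT]
  linarith

lemma sum3 {i j l : Fin n} (hij : i ≠ j) (hil : i ≠ l) (hjl : j ≠ l) (f : Fin n → ℝ) :
    ∑ a ∈ ({i,j,l} : Finset (Fin n)), f a = f i + f j + f l := by
  rw [Finset.sum_insert (by simp [hij, hil]), Finset.sum_insert (by simp [hjl]),
    Finset.sum_singleton, add_assoc]

lemma dotD {i j l : Fin n} (hij : i ≠ j) (hil : i ≠ l) (hjl : j ≠ l) (y z : Fin n → ℝ) :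
    y ⬝ᵥ ((diagS {i,j,l}) *ᵥ z) = y i * z i + y j * z j + y l * z l := by
  have : ∀ a, y a * ((diagS {i,j,l} : Matrix (Fin n) (Fin n) ℝ) *ᵥ z) a
      = if a ∈ ({i,j,l} : Finset (Fin n)) then y a * z a else 0 := by
    intro a
    rw [diagS, Matrix.mulVec_diagonal]
    by_cases h : a ∈ ({i,j,l} : Finset (Fin n)) <;> simp [h]
  rw [dotProduct]
  simp only [this]
  rw [Finset.sum_ite_mem, Finset.univ_inter, sum3 hij hil hjl]

lemma dotw {i j l : Fin n} (hij : i ≠ j) (hil : i ≠ l) (hjl : j ≠ l) (ε y : Fin n → ℝ) :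
    (fun a => if a ∈ ({i,j,l} : Finset (Fin n)) then ε a else 0) ⬝ᵥ y
      = ε i * y i + ε j * y j + ε l * y l := by
  simp only [dotProduct, ite_mul, zero_mul]
  rw [Finset.sum_ite_mem, Finset.univ_inter, sum3 hij hil hjl]

lemma dsym (S : Finset (Fin n)) (y v : Fin n → ℝ) :
    ((diagS S) *ᵥ y) ⬝ᵥ v = y ⬝ᵥ ((diagS S) *ᵥ v) := by
  simp only [dotProduct, diagS, Matrix.mulVec_diagonal]
  exact Finset.sum_congr rfl fun a _ => by ring

lemma Vdot (V : Matrix (Fin n) (Fin k) ℝ) (z1 z2 : Fin n → ℝ) :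
    (Vᵀ *ᵥ z1) ⬝ᵥ (Vᵀ *ᵥ z2) = z1 ⬝ᵥ ((V * Vᵀ) *ᵥ z2) := by
  rw [← Matrix.mulVec_mulVec, dotProduct_mulVec z1, ← Matrix.mulVec_transpose]

lemma VdotX (V : Matrix (Fin n) (Fin k) ℝ) (z : Fin n → ℝ) (x : Fin k → ℝ) :
    (Vᵀ *ᵥ z) ⬝ᵥ x = z ⬝ᵥ (V *ᵥ x) := by
  rw [dotProduct_mulVec z, ← Matrix.mulVec_transpose]

lemma vmv (w y : Fin n → ℝ) : vecMulVec w w *ᵥ y = (w ⬝ᵥ y) • w := by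
  funext a
  simp only [Matrix.mulVec, Matrix.vecMulVec_apply, dotProduct, Pi.smul_apply,
    smul_eq_mul]
  rw [Finset.sum_mul]
  exact Finset.sum_congr rfl fun b _ => by ring

lemma Dsupp (S : Finset (Fin n)) (y : Fin n → ℝ) (h : ∀ a ∉ S, y a = 0) :
    diagS S *ᵥ y = y := by
  funext a
  rw [diagS, Matrix.mulVec_diagonal]
  by_cases ha : a ∈ S
  · simp [ha]
  · simp [ha, h a ha]

lemma DGD_eq (F : TwoUniformFrame n k) (i j l : Fin n)
    (hij : i ≠ j) (hil : i ≠ l) (hjl : j ≠ l)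
    (s : ℝ) (ε : Fin n → ℝ) (hsq : ∀ a, ε a * ε a = 1)
    (hQij : F.Q i j = s * (ε i * ε j)) (hQil : F.Q i l = s * (ε i * ε l))
    (hQjl : F.Q j l = s * (ε j * ε l)) :
    diagS {i, j, l} * (F.V * F.Vᵀ) * diagS {i, j, l}
      = ((k : ℝ) / n - s * c n k) • diagS {i, j, l}
        + (s * c n k) • vecMulVec (fun a => if a ∈ ({i,j,l} : Finset (Fin n)) then ε a else 0)
            (fun a => if a ∈ ({i,j,l} : Finset (Fin n)) then ε a else 0) := by
  have hsymm : ∀ a b, F.Q b a = F.Q a b := by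
    intro a b
    have := congrFun (congrFun F.symm a) b
    simpa [Matrix.transpose_apply] using this
  have hQall : ∀ a ∈ ({i,j,l} : Finset (Fin n)), ∀ b ∈ ({i,j,l} : Finset (Fin n)),
      a ≠ b → F.Q a b = s * (ε a * ε b) := by
    intro a ha b hb hab
    simp only [Finset.mem_insert, Finset.mem_singleton] at ha hb
    rcases ha with rfl|rfl|rfl <;> rcases hb with rfl|rfl|rfl <;>
      first
        | exact absurd rfl hab
        | assumption
        | (rw [hsymm]; first
            | (rw [hQij]; ring)
            | (rw [hQil]; ring)
            | (rw [hQjl]; ring))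
  ext a b
  have hG : (F.V * F.Vᵀ) a b
      = ((k : ℝ) / n) * (if a = b then 1 else 0) + c n k * F.Q a b := by
    have := congrFun (congrFun F.gram a) b
    simpa [Matrix.one_apply] using this
  simp only [diagS]
  rw [Matrix.mul_diagonal, Matrix.diagonal_mul]
  simp only [Matrix.add_apply, Matrix.smul_apply, Matrix.diagonal_apply,
    Matrix.vecMulVec_apply, smul_eq_mul]
  by_cases ha : a ∈ ({i,j,l} : Finset (Fin n))
  · by_cases hb : b ∈ ({i,j,l} : Finset (Fin n))
    · by_cases hab : a = b
      · subst hab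
        rw [hG, F.diag a]
        simp only [Finset.mem_insert, Finset.mem_singleton] at ha
        simp [ha, hsq a]
        try ring
      · rw [hG, hQall a ha b hb hab]
        simp only [Finset.mem_insert, Finset.mem_singleton] at ha hb
        simp [ha, hb, hab]
        try ring
    · have hab : a ≠ b := fun h => hb (h ▸ ha)
      simp only [Finset.mem_insert, Finset.mem_singleton] at hb
      simp [hb, hab]
  · have h0 : (if a ∈ ({i,j,l} : Finset (Fin n)) then (1:ℝ) else 0) = 0 := by simp [ha]
    simp only [Finset.mem_insert, Finset.mem_singleton] at ha
    simp [ha]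

lemma mvDGD (F : TwoUniformFrame n k) (i j l : Fin n)
    (hij : i ≠ j) (hil : i ≠ l) (hjl : j ≠ l)
    (s : ℝ) (ε : Fin n → ℝ) (hsq : ∀ a, ε a * ε a = 1)
    (hQij : F.Q i j = s * (ε i * ε j)) (hQil : F.Q i l = s * (ε i * ε l))
    (hQjl : F.Q j l = s * (ε j * ε l)) (y : Fin n → ℝ) :
    (diagS {i,j,l} * (F.V * F.Vᵀ) * diagS {i,j,l}) *ᵥ y
      = ((k : ℝ) / n - s * c n k) • (diagS {i,j,l} *ᵥ y)
        + ((s * c n k) * ((fun a => if a ∈ ({i,j,l} : Finset (Fin n)) then ε a else 0) ⬝ᵥ y)) •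
          (fun a => if a ∈ ({i,j,l} : Finset (Fin n)) then ε a else 0) := by
  rw [DGD_eq F i j l hij hil hjl s ε hsq hQij hQil hQjl, Matrix.add_mulVec,
    Matrix.smul_mulVec, Matrix.smul_mulVec, vmv, smul_smul]

lemma form_eq (F : TwoUniformFrame n k) (i j l : Fin n)
    (hij : i ≠ j) (hil : i ≠ l) (hjl : j ≠ l)
    (s : ℝ) (ε : Fin n → ℝ) (hsq : ∀ a, ε a * ε a = 1)
    (hQij : F.Q i j = s * (ε i * ε j)) (hQil : F.Q i l = s * (ε i * ε l))
    (hQjl : F.Q j l = s * (ε j * ε l)) (y z : Fin n → ℝ) :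
    (F.Vᵀ *ᵥ (diagS {i,j,l} *ᵥ y)) ⬝ᵥ (F.Vᵀ *ᵥ (diagS {i,j,l} *ᵥ z))
      = ((k : ℝ) / n - s * c n k) * (y i * z i + y j * z j + y l * z l)
        + (s * c n k) * ((ε i * y i + ε j * y j + ε l * y l)
            * (ε i * z i + ε j * z j + ε l * z l)) := by
  rw [Vdot, Matrix.mulVec_mulVec, dsym, Matrix.mulVec_mulVec, ← Matrix.mul_assoc, mvDGD F i j l hij hil hjl s ε hsq hQij hQil hQjl z,
    dotProduct_add, dotProduct_smul, dotProduct_smul,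
    dotD hij hil hjl]
  have h2 : ∀ v : Fin n → ℝ, v ⬝ᵥ (fun a => if a ∈ ({i,j,l} : Finset (Fin n)) then ε a else 0)
      = ε i * v i + ε j * v j + ε l * v l := by
    intro v
    rw [dotProduct_comm, dotw hij hil hjl]
  rw [dotw hij hil hjl ε z, h2 y]
  simp only [smul_eq_mul]
  ring

lemma cauchy3 (a b d p q r : ℝ) (ha : a*a = 1) (hb : b*b = 1) (hd : d*d = 1) :
    (a*p + b*q + d*r) * (a*p + b*q + d*r) ≤ 3 * (p*p + q*q + r*r) := by
  nlinarith [sq_nonneg (a*p - b*q), sq_nonneg (a*p - d*r), sq_nonneg (b*q - d*r),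
    sq_nonneg p, sq_nonneg q, sq_nonneg r]

lemma master_even (F : TwoUniformFrame n k) (i j l : Fin n)
    (hij : i ≠ j) (hil : i ≠ l) (hjl : j ≠ l) (hk : 0 < k)
    (ε : Fin n → ℝ) (hsq : ∀ a, ε a * ε a = 1)
    (hQij : F.Q i j = 1 * (ε i * ε j)) (hQil : F.Q i l = 1 * (ε i * ε l))
    (hQjl : F.Q j l = 1 * (ε j * ε l)) :
    opNorm (F.Vᵀ * diagS {i,j,l} * F.V) = (k : ℝ) / n + 2 * c n k := by
  have hn : (0:ℝ) < n := by exact_mod_cast i.pos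
  have hc : 0 ≤ c n k := Real.sqrt_nonneg _
  have hkn : (0:ℝ) < (k:ℝ)/n := div_pos (by exact_mod_cast hk) hn
  have hlam : 0 < (k:ℝ)/n + 2 * c n k := by linarith
  set w : Fin n → ℝ := fun a => if a ∈ ({i,j,l} : Finset (Fin n)) then ε a else 0 with hw
  have hDw : diagS {i,j,l} *ᵥ w = w := Dsupp _ w (fun a ha => by
    show (if a ∈ ({i,j,l} : Finset (Fin n)) then ε a else 0) = 0
    exact if_neg ha)
  have hwi : w i = ε i := by simp [hw]
  have hwj : w j = ε j := by simp [hw]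
  have hwl : w l = ε l := by simp [hw]
  have e1 : ∀ x, (F.Vᵀ * diagS {i,j,l} * F.V) *ᵥ x
      = F.Vᵀ *ᵥ (diagS {i,j,l} *ᵥ (F.V *ᵥ x)) := by
    intro x
    rw [Matrix.mulVec_mulVec, Matrix.mulVec_mulVec, Matrix.mul_assoc]
  apply aux_opNorm _ _ hlam.le (F.Vᵀ *ᵥ w)
  · -- u ⬝ᵥ u ≠ 0
    have h1 : (F.Vᵀ *ᵥ w) ⬝ᵥ (F.Vᵀ *ᵥ w) = 3 * ((k:ℝ)/n + 2 * c n k) := by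
      conv_lhs => rw [← hDw]
      rw [form_eq F i j l hij hil hjl 1 ε hsq hQij hQil hQjl w w,
        hwi, hwj, hwl, hsq i, hsq j, hsq l]
      ring
    rw [h1]
    positivity
  · -- eigenvector
    rw [e1, Matrix.mulVec_mulVec w F.V F.Vᵀ]
    have h3 : diagS {i,j,l} *ᵥ ((F.V * F.Vᵀ) *ᵥ w) = ((k:ℝ)/n + 2 * c n k) • w := by
      conv_lhs => rw [← hDw]
      rw [Matrix.mulVec_mulVec, Matrix.mulVec_mulVec,
        mvDGD F i j l hij hil hjl 1 ε hsq hQij hQil hQjl w, hDw,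
        dotw hij hil hjl ε w, hwi, hwj, hwl, hsq i, hsq j, hsq l, ← add_smul]
      congr 1
      ring
    rw [h3, Matrix.mulVec_smul]
  · -- upper bound
    intro x
    rw [e1]
    set y := F.V *ᵥ x with hy
    have hL := form_eq F i j l hij hil hjl 1 ε hsq hQij hQil hQjl y y
    have hR : (F.Vᵀ *ᵥ (diagS {i,j,l} *ᵥ y)) ⬝ᵥ x = y i * y i + y j * y j + y l * y l := by
      rw [VdotX, ← hy, dsym, dotD hij hil hjl]
    rw [hL, hR]
    have key : (ε i * y i + ε j * y j + ε l * y l) * (ε i * y i + ε j * y j + ε l * y l)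
        ≤ 3 * (y i * y i + y j * y j + y l * y l) :=
      cauchy3 (ε i) (ε j) (ε l) (y i) (y j) (y l) (hsq i) (hsq j) (hsq l)
    nlinarith [mul_nonneg hc (sub_nonneg.mpr key)]

lemma master_odd (F : TwoUniformFrame n k) (i j l : Fin n)
    (hij : i ≠ j) (hil : i ≠ l) (hjl : j ≠ l) (hk : 0 < k)
    (ε : Fin n → ℝ) (hsq : ∀ a, ε a * ε a = 1)
    (hQij : F.Q i j = (-1) * (ε i * ε j)) (hQil : F.Q i l = (-1) * (ε i * ε l))
    (hQjl : F.Q j l = (-1) * (ε j * ε l)) :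
    opNorm (F.Vᵀ * diagS {i,j,l} * F.V) = (k : ℝ) / n + c n k := by
  have hn : (0:ℝ) < n := by exact_mod_cast i.pos
  have hc : 0 ≤ c n k := Real.sqrt_nonneg _
  have hkn : (0:ℝ) < (k:ℝ)/n := div_pos (by exact_mod_cast hk) hn
  have hlam : 0 < (k:ℝ)/n + c n k := by linarith
  set v : Fin n → ℝ := fun a => if a = i then ε j else if a = j then -(ε i) else 0 with hv
  have hvsupp : ∀ a, a ∉ ({i,j,l} : Finset (Fin n)) → v a = 0 := by
    intro a ha
    simp only [Finset.mem_insert, Finset.mem_singleton, not_or] at ha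
    simp [hv, ha.1, ha.2.1]
  have hDv : diagS {i,j,l} *ᵥ v = v := Dsupp _ v hvsupp
  have hvi : v i = ε j := by simp [hv]
  have hvj : v j = -(ε i) := by simp [hv, Ne.symm hij]
  have hvl : v l = 0 := by simp [hv, Ne.symm hil, Ne.symm hjl]
  have e1 : ∀ x, (F.Vᵀ * diagS {i,j,l} * F.V) *ᵥ x
      = F.Vᵀ *ᵥ (diagS {i,j,l} *ᵥ (F.V *ᵥ x)) := by
    intro x
    rw [Matrix.mulVec_mulVec, Matrix.mulVec_mulVec, Matrix.mul_assoc]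
  apply aux_opNorm _ _ hlam.le (F.Vᵀ *ᵥ v)
  · have h1 : (F.Vᵀ *ᵥ v) ⬝ᵥ (F.Vᵀ *ᵥ v) = 2 * ((k:ℝ)/n + c n k) := by
      conv_lhs => rw [← hDv]
      rw [form_eq F i j l hij hil hjl (-1) ε hsq hQij hQil hQjl v v,
        hvi, hvj, hvl]
      have h2 : ε i * ε j + ε j * -(ε i) + ε l * 0 = 0 := by ring
      rw [h2]
      linear_combination ((k:ℝ)/n + c n k) * hsq i + ((k:ℝ)/n + c n k) * hsq j
    rw [h1]
    positivity
  · rw [e1, Matrix.mulVec_mulVec v F.V F.Vᵀ]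
    have h3 : diagS {i,j,l} *ᵥ ((F.V * F.Vᵀ) *ᵥ v) = ((k:ℝ)/n + c n k) • v := by
      conv_lhs => rw [← hDv]
      rw [Matrix.mulVec_mulVec, Matrix.mulVec_mulVec,
        mvDGD F i j l hij hil hjl (-1) ε hsq hQij hQil hQjl v, hDv,
        dotw hij hil hjl ε v, hvi, hvj, hvl]
      have h2 : ε i * ε j + ε j * -(ε i) + ε l * 0 = 0 := by ring
      rw [h2]
      simp only [mul_zero, zero_smul, add_zero]
      congr 1
      ring
    rw [h3, Matrix.mulVec_smul]
  · intro x
    rw [e1]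
    set y := F.V *ᵥ x with hy
    have hL := form_eq F i j l hij hil hjl (-1) ε hsq hQij hQil hQjl y y
    have hR : (F.Vᵀ *ᵥ (diagS {i,j,l} *ᵥ y)) ⬝ᵥ x = y i * y i + y j * y j + y l * y l := by
      rw [VdotX, ← hy, dsym, dotD hij hil hjl]
    rw [hL, hR]
    nlinarith [mul_nonneg hc (mul_self_nonneg (ε i * y i + ε j * y j + ε l * y l))]

theorem statement16 (n k : ℕ) (F : TwoUniformFrame n k) (i j l : Fin n)
    (hij : i ≠ j) (hil : i ≠ l) (hjl : j ≠ l) :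
    (Even ((if (frameGraph F).Adj i j then 1 else 0) +
        (if (frameGraph F).Adj i l then 1 else 0) +
        (if (frameGraph F).Adj j l then (1 : ℕ) else 0)) →
      opNorm (F.Vᵀ * diagS ({i, j, l} : Finset (Fin n)) * F.V) =
        (k : ℝ) / n + 2 * c n k) ∧
    (Odd ((if (frameGraph F).Adj i j then 1 else 0) +
        (if (frameGraph F).Adj i l then 1 else 0) +
        (if (frameGraph F).Adj j l then (1 : ℕ) else 0)) →
      opNorm (F.Vᵀ * diagS ({i, j, l} : Finset (Fin n)) * F.V) =
        (k : ℝ) / n + c n k) := by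
  rcases Nat.eq_zero_or_pos k with hk | hk
  · subst hk
    have hT : Matrix.toEuclideanCLM (𝕜 := ℝ)
        (F.Vᵀ * diagS ({i, j, l} : Finset (Fin n)) * F.V) = 0 := by
      ext x a
      exact a.elim0
    have hopn : opNorm (F.Vᵀ * diagS ({i, j, l} : Finset (Fin n)) * F.V) = 0 := by
      rw [opNorm, hT, norm_zero]
    have hc0 : c n 0 = 0 := by simp [c]
    constructor <;> intro _ <;> rw [hopn, hc0] <;> norm_num
  · have hAdj : ∀ a b : Fin n, a ≠ b → ((frameGraph F).Adj a b ↔ F.Q a b = -1) := by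
      intro a b hab
      show (a ≠ b ∧ F.Q a b = -1) ↔ F.Q a b = -1
      exact ⟨fun h => h.2, fun h => ⟨hab, h⟩⟩
    rcases F.offdiag i j hij with h1 | h1 <;>
      rcases F.offdiag i l hil with h2 | h2 <;>
        rcases F.offdiag j l hjl with h3 | h3
    · -- Q i j = 1, Q i l = 1, Q j l = 1
      refine ⟨fun _ => ?_, fun hpar => by exfalso; norm_num [hAdj i j hij, hAdj i l hil, hAdj j l hjl, h1, h2, h3, Nat.odd_iff, Nat.even_iff] at hpar⟩
      apply master_even F i j l hij hil hjl hk
        (fun a => if a = j then (1 : ℝ) else if a = l then 1 else 1)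
      · intro a
        split_ifs <;> norm_num
      · rw [h1]; norm_num [hij, hil, hjl, Ne.symm hij, Ne.symm hil, Ne.symm hjl]
      · rw [h2]; norm_num [hij, hil, hjl, Ne.symm hij, Ne.symm hil, Ne.symm hjl]
      · rw [h3]; norm_num [hij, hil, hjl, Ne.symm hij, Ne.symm hil, Ne.symm hjl]
    · -- Q i j = 1, Q i l = 1, Q j l = -1
      refine ⟨fun hpar => by exfalso; norm_num [hAdj i j hij, hAdj i l hil, hAdj j l hjl, h1, h2, h3, Nat.odd_iff, Nat.even_iff] at hpar, fun _ => ?_⟩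
      apply master_odd F i j l hij hil hjl hk
        (fun a => if a = j then ((-1) : ℝ) else if a = l then (-1) else 1)
      · intro a
        split_ifs <;> norm_num
      · rw [h1]; norm_num [hij, hil, hjl, Ne.symm hij, Ne.symm hil, Ne.symm hjl]
      · rw [h2]; norm_num [hij, hil, hjl, Ne.symm hij, Ne.symm hil, Ne.symm hjl]
      · rw [h3]; norm_num [hij, hil, hjl, Ne.symm hij, Ne.symm hil, Ne.symm hjl]
    · -- Q i j = 1, Q i l = -1, Q j l = 1
      refine ⟨fun hpar => by exfalso; norm_num [hAdj i j hij, hAdj i l hil, hAdj j l hjl, h1, h2, h3, Nat.odd_iff, Nat.even_iff] at hpar, fun _ => ?_⟩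
      apply master_odd F i j l hij hil hjl hk
        (fun a => if a = j then ((-1) : ℝ) else if a = l then 1 else 1)
      · intro a
        split_ifs <;> norm_num
      · rw [h1]; norm_num [hij, hil, hjl, Ne.symm hij, Ne.symm hil, Ne.symm hjl]
      · rw [h2]; norm_num [hij, hil, hjl, Ne.symm hij, Ne.symm hil, Ne.symm hjl]
      · rw [h3]; norm_num [hij, hil, hjl, Ne.symm hij, Ne.symm hil, Ne.symm hjl]
    · -- Q i j = 1, Q i l = -1, Q j l = -1
      refine ⟨fun _ => ?_, fun hpar => by exfalso; norm_num [hAdj i j hij, hAdj i l hil, hAdj j l hjl, h1, h2, h3, Nat.odd_iff, Nat.even_iff] at hpar⟩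
      apply master_even F i j l hij hil hjl hk
        (fun a => if a = j then (1 : ℝ) else if a = l then (-1) else 1)
      · intro a
        split_ifs <;> norm_num
      · rw [h1]; norm_num [hij, hil, hjl, Ne.symm hij, Ne.symm hil, Ne.symm hjl]
      · rw [h2]; norm_num [hij, hil, hjl, Ne.symm hij, Ne.symm hil, Ne.symm hjl]
      · rw [h3]; norm_num [hij, hil, hjl, Ne.symm hij, Ne.symm hil, Ne.symm hjl]
    · -- Q i j = -1, Q i l = 1, Q j l = 1
      refine ⟨fun hpar => by exfalso; norm_num [hAdj i j hij, hAdj i l hil, hAdj j l hjl, h1, h2, h3, Nat.odd_iff, Nat.even_iff] at hpar, fun _ => ?_⟩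
      apply master_odd F i j l hij hil hjl hk
        (fun a => if a = j then (1 : ℝ) else if a = l then (-1) else 1)
      · intro a
        split_ifs <;> norm_num
      · rw [h1]; norm_num [hij, hil, hjl, Ne.symm hij, Ne.symm hil, Ne.symm hjl]
      · rw [h2]; norm_num [hij, hil, hjl, Ne.symm hij, Ne.symm hil, Ne.symm hjl]
      · rw [h3]; norm_num [hij, hil, hjl, Ne.symm hij, Ne.symm hil, Ne.symm hjl]
    · -- Q i j = -1, Q i l = 1, Q j l = -1
      refine ⟨fun _ => ?_, fun hpar => by exfalso; norm_num [hAdj i j hij, hAdj i l hil, hAdj j l hjl, h1, h2, h3, Nat.odd_iff, Nat.even_iff] at hpar⟩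
      apply master_even F i j l hij hil hjl hk
        (fun a => if a = j then ((-1) : ℝ) else if a = l then 1 else 1)
      · intro a
        split_ifs <;> norm_num
      · rw [h1]; norm_num [hij, hil, hjl, Ne.symm hij, Ne.symm hil, Ne.symm hjl]
      · rw [h2]; norm_num [hij, hil, hjl, Ne.symm hij, Ne.symm hil, Ne.symm hjl]
      · rw [h3]; norm_num [hij, hil, hjl, Ne.symm hij, Ne.symm hil, Ne.symm hjl]
    · -- Q i j = -1, Q i l = -1, Q j l = 1
      refine ⟨fun _ => ?_, fun hpar => by exfalso; norm_num [hAdj i j hij, hAdj i l hil, hAdj j l hjl, h1, h2, h3, Nat.odd_iff, Nat.even_iff] at hpar⟩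
      apply master_even F i j l hij hil hjl hk
        (fun a => if a = j then ((-1) : ℝ) else if a = l then (-1) else 1)
      · intro a
        split_ifs <;> norm_num
      · rw [h1]; norm_num [hij, hil, hjl, Ne.symm hij, Ne.symm hil, Ne.symm hjl]
      · rw [h2]; norm_num [hij, hil, hjl, Ne.symm hij, Ne.symm hil, Ne.symm hjl]
      · rw [h3]; norm_num [hij, hil, hjl, Ne.symm hij, Ne.symm hil, Ne.symm hjl]
    · -- Q i j = -1, Q i l = -1, Q j l = -1
      refine ⟨fun hpar => by exfalso; norm_num [hAdj i j hij, hAdj i l hil, hAdj j l hjl, h1, h2, h3, Nat.odd_iff, Nat.even_iff] at hpar, fun _ => ?_⟩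
      apply master_odd F i j l hij hil hjl hk
        (fun a => if a = j then (1 : ℝ) else if a = l then 1 else 1)
      · intro a
        split_ifs <;> norm_num
      · rw [h1]; norm_num [hij, hil, hjl, Ne.symm hij, Ne.symm hil, Ne.symm hjl]
      · rw [h2]; norm_num [hij, hil, hjl, Ne.symm hij, Ne.symm hil, Ne.symm hjl]
      · rw [h3]; norm_num [hij, hil, hjl, Ne.symm hij, Ne.symm hil, Ne.symm hjl]

end FramesErasures
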